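/- arXiv:2201.13115 — 4 statements merged into one kernel-verified Lean document; each statement's English description precedes it below -/
import Mathlib

section
/- Let G be a graph, T ⊆ V(G), and let A₁ and A₂ be two edge-disjoint T-connectors in G. Then A₁ ∪ A₂ contains a connected subgraph C in which every vertex has even degree and which contains every vertex of T. -/
open SimpleGraph

/-- The line graph of a hypergraph given by hyperedges `He : E → Finset V`:
vertices are hyperedges, two adjacent iff distinct and intersecting. -/
def hLineGraph {V E : Type} (He : E → Finset V) : SimpleGraph E where
  Adj e f := e ≠ f ∧ ∃ v, v ∈ He e ∧ v ∈ He f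
  symm := by constructor; rintro e f ⟨h, v, h1, h2⟩; exact ⟨h.symm, v, h2, h1⟩
  loopless := by constructor; rintro e ⟨h, _⟩; exact h rfl

/-- The incidence graph of a hypergraph: bipartite on `V ⊕ E`, with
`inl v` (black) adjacent to `inr e` (white) iff `v ∈ e`. -/
def incGraph {V E : Type} (He : E → Finset V) : SimpleGraph (V ⊕ E) where
  Adj x y := (∃ v e, x = Sum.inl v ∧ y = Sum.inr e ∧ v ∈ He e) ∨
             (∃ v e, x = Sum.inr e ∧ y = Sum.inl v ∧ v ∈ He e)
  symm := by constructor; rintro x y (⟨v, e, h1, h2, h3⟩ | ⟨v, e, h1, h2, h3⟩)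
             · exact Or.inr ⟨v, e, h2, h1, h3⟩
             · exact Or.inl ⟨v, e, h2, h1, h3⟩
  loopless := by constructor; rintro x (⟨v, e, h1, h2, _⟩ | ⟨v, e, h1, h2, _⟩) <;> simp_all

/-- `T` is `k`-edge-connected in `G`: any two vertices of `T` are joined by
`k` pairwise edge-disjoint paths. -/
def EdgeConnectedIn {V : Type} (G : SimpleGraph V) (T : Set V) (k : ℕ) : Prop :=
  ∀ s₁ ∈ T, ∀ s₂ ∈ T, ∃ p : Fin k → G.Walk s₁ s₂,
    (∀ i, (p i).IsPath) ∧ ∀ i j, i ≠ j → ∀ e, e ∈ (p i).edges → e ∉ (p j).edges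

/-- `G` is `k`-connected: more than `k` vertices, and removing fewer than `k`
vertices leaves a connected graph. -/
def IsKConnected {V : Type} (G : SimpleGraph V) (k : ℕ) : Prop :=
  k < Nat.card V ∧ ∀ S : Set V, S.ncard < k → (G.induce (Sᶜ : Set V)).Connected

/-- A `T`-connector: a family of pairwise edge-disjoint `T`-paths (endpoints in `T`,
internal vertices outside `T`) such that short-cutting all of them yields a graph whose
induced subgraph on `T` is connected. -/
structure TConnector {V : Type} (G : SimpleGraph V) (T : Set V) where
  ι : Type
  finite : Finite ι
  a : ι → V
  b : ι → V
  walk : (i : ι) → G.Walk (a i) (b i)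
  isPath : ∀ i, (walk i).IsPath
  a_mem : ∀ i, a i ∈ T
  b_mem : ∀ i, b i ∈ T
  internal : ∀ i v, v ∈ (walk i).support → v ∈ T → v = a i ∨ v = b i
  edgeDisj : ∀ i j, i ≠ j → ∀ e, e ∈ (walk i).edges → e ∉ (walk j).edges
  shortcut_conn :
    ((SimpleGraph.fromEdgeSet (⋃ i, {s(a i, b i)})).induce T).Connected

/-- The edge set of a `T`-connector (the union of the edges of its paths). -/
def TConnector.edgeSet {V : Type} {G : SimpleGraph V} {T : Set V}
    (C : TConnector G T) : Set (Sym2 V) :=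
  ⋃ i, {e | e ∈ (C.walk i).edges}

/-- The `T`-connector viewed as a graph (the union of its paths). -/
def TConnector.graph {V : Type} {G : SimpleGraph V} {T : Set V}
    (C : TConnector G T) : SimpleGraph V :=
  SimpleGraph.fromEdgeSet C.edgeSet

/-- A closed `W`-quasitrail: a closed walk traversing each edge at most twice such
that every doubly-traversed edge `e` has an endpoint `w ∈ W` visited exactly once
whose predecessor and successor edges both equal `e`. -/
def IsClosedQuasitrail {V : Type} [DecidableEq V] (G : SimpleGraph V) (W : Set V)
    {x : V} (p : G.Walk x x) : Prop :=
  (∀ e, p.edges.count e ≤ 2) ∧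
  ∀ e, p.edges.count e = 2 →
    ∃ w u, w ∈ W ∧ e = s(u, w) ∧ p.support.tail.count w = 1 ∧
      ∃ d₁ d₂ : G.Dart, d₁.toProd = (u, w) ∧ d₂.toProd = (w, u) ∧
        [d₁, d₂] <:+: (p.darts ++ p.darts)


section Helpers

open Finset

private lemma zmod2_add_self (x : ZMod 2) : x + x = 0 := by
  rw [← two_mul, show (2 : ZMod 2) = 0 by decide, zero_mul]

private lemma zmod2_cast_eq (n : ℕ) : ((n : ZMod 2)) = if Odd n then 1 else 0 := by
  rw [← ZMod.natCast_mod]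
  rcases Nat.even_or_odd n with h | h
  · rw [Nat.even_iff.mp h, if_neg (by simpa [Nat.not_odd_iff_even] using h)]
    exact Nat.cast_zero
  · rw [Nat.odd_iff.mp h, if_pos h]
    exact Nat.cast_one

private lemma even_iff_zmod2 (n : ℕ) : Even n ↔ (n : ZMod 2) = 0 := by
  rw [zmod2_cast_eq]
  rcases Nat.even_or_odd n with h | h
  · rw [if_neg (Nat.not_odd_iff_even.mpr h)]
    exact iff_of_true h rfl
  · rw [if_pos h]
    exact iff_of_false (Nat.not_even_iff_odd.mpr h) one_ne_zero

private lemma edge_count_parity {V : Type} [DecidableEq V] {G : SimpleGraph V} {a b : V}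
    (p : G.Walk a b) (hp : p.IsPath) (v : V) :
    (((p.edges.toFinset.filter (fun e => v ∈ e)).card : ℕ) : ZMod 2)
      = (if v = a then 1 else 0) + (if v = b then 1 else 0) := by
  induction p with
  | nil =>
      simp only [SimpleGraph.Walk.edges_nil, List.toFinset_nil, Finset.filter_empty,
        Finset.card_empty, Nat.cast_zero]
      split_ifs <;> decide
  | @cons u c d hadj q ih =>
      rw [SimpleGraph.Walk.cons_isPath_iff] at hp
      obtain ⟨hq, hu⟩ := hp
      have hnotin : s(u, c) ∉ q.edges.toFinset := by
        rw [List.mem_toFinset]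
        exact fun hmem => hu (SimpleGraph.Walk.fst_mem_support_of_mem_edges q hmem)
      rw [SimpleGraph.Walk.edges_cons, List.toFinset_cons, Finset.filter_insert]
      by_cases hm : v ∈ s(u, c)
      · rw [if_pos hm, Finset.card_insert_of_notMem
          (fun hc => hnotin (Finset.filter_subset _ _ hc)), Nat.cast_add, Nat.cast_one, ih hq]
        have hne := hadj.ne
        rcases Sym2.mem_iff.mp hm with h1 | h1 <;> subst h1
        · rw [if_pos rfl, if_neg hne]
          generalize (if v = d then (1 : ZMod 2) else 0) = z
          revert z; decide
        · rw [if_neg (Ne.symm hne), if_pos rfl]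
          generalize (if v = d then (1 : ZMod 2) else 0) = z
          revert z; decide
      · rw [if_neg hm, ih hq]
        have h1 : v ≠ u := fun h => hm (by rw [h]; exact Sym2.mem_mk_left u c)
        have h2 : v ≠ c := fun h => hm (by rw [h]; exact Sym2.mem_mk_right u c)
        rw [if_neg h1, if_neg h2]

private lemma sum_symmDiff_zmod {ι : Type} [DecidableEq ι] (A B : Finset ι) (f : ι → ZMod 2) :
    ∑ i ∈ symmDiff A B, f i = (∑ i ∈ A, f i) + ∑ i ∈ B, f i := by
  have key : ∀ (C D : Finset ι), ∑ i ∈ C, f i = ∑ i ∈ C \ D, f i + ∑ i ∈ C ∩ D, f i := by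
    intro C D
    rw [← Finset.sum_union (Finset.disjoint_sdiff_inter C D), Finset.sdiff_union_inter]
  rw [show symmDiff A B = (A \ B) ∪ (B \ A) from symmDiff_def A B,
    Finset.sum_union disjoint_sdiff_sdiff, key A B, key B A, Finset.inter_comm B A]
  generalize ∑ i ∈ A \ B, f i = x
  generalize ∑ i ∈ B \ A, f i = y
  generalize ∑ i ∈ A ∩ B, f i = z
  revert x y z; decide

private lemma adj_shortcut {V : Type} {T : Set V} {ι : Type} (a b : ι → V) {c m : T}
    (h : ((SimpleGraph.fromEdgeSet (⋃ i, {s(a i, b i)})).induce T).Adj c m) :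
    ∃ i, ((c : V) = a i ∧ (m : V) = b i) ∨ ((c : V) = b i ∧ (m : V) = a i) := by
  have h' : (SimpleGraph.fromEdgeSet (⋃ i, {s(a i, b i)})).Adj (c : V) (m : V) := h
  rw [SimpleGraph.fromEdgeSet_adj] at h'
  obtain ⟨he, -⟩ := h'
  rw [Set.mem_iUnion] at he
  obtain ⟨i, hi⟩ := he
  rw [Set.mem_singleton_iff, Sym2.eq_iff] at hi
  exact ⟨i, hi⟩

private lemma walk_tjoin {V : Type} {T : Set V} {ι : Type} [Fintype ι] [DecidableEq ι]
    [DecidableEq V] (a b : ι → V) {c d : T}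
    (w : ((SimpleGraph.fromEdgeSet (⋃ i, {s(a i, b i)})).induce T).Walk c d) :
    ∃ S : Finset ι, ∀ v : V,
      (∑ i ∈ S, ((if v = a i then (1 : ZMod 2) else 0) + (if v = b i then 1 else 0)))
        = (if v = (c : V) then 1 else 0) + (if v = (d : V) then 1 else 0) := by
  induction w with
  | nil =>
      refine ⟨∅, fun v => ?_⟩
      rw [Finset.sum_empty]
      split_ifs <;> decide
  | @cons c m d hadj q ih =>
      obtain ⟨S', hS'⟩ := ih
      obtain ⟨i, hi⟩ := adj_shortcut a b hadj
      refine ⟨symmDiff S' {i}, fun v => ?_⟩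
      rw [sum_symmDiff_zmod, hS', Finset.sum_singleton]
      have key : (if v = a i then (1 : ZMod 2) else 0) + (if v = b i then 1 else 0)
          = (if v = (c : V) then 1 else 0) + (if v = (m : V) then 1 else 0) := by
        rcases hi with ⟨h1, h2⟩ | ⟨h1, h2⟩ <;> rw [← h1, ← h2]
        exact add_comm _ _
      rw [key]
      generalize (if v = (c : V) then (1 : ZMod 2) else 0) = x
      generalize (if v = (m : V) then (1 : ZMod 2) else 0) = y
      generalize (if v = (d : V) then (1 : ZMod 2) else 0) = z
      revert x y z; decide

private lemma exists_tjoin {V : Type} [DecidableEq V] {T : Set V} {ι : Type} [Fintype ι]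
    [DecidableEq ι] (a b : ι → V)
    (hconn : ((SimpleGraph.fromEdgeSet (⋃ i, {s(a i, b i)})).induce T).Connected)
    (X : Finset V) (hXeven : Even X.card) (hXT : ∀ v ∈ X, v ∈ T) :
    ∃ S : Finset ι, ∀ v : V,
      (∑ i ∈ S, ((if v = a i then (1 : ZMod 2) else 0) + (if v = b i then 1 else 0)))
        = (if v ∈ X then 1 else 0) := by
  suffices H : ∀ n (X : Finset V), X.card = n → Even X.card → (∀ v ∈ X, v ∈ T) →
      ∃ S : Finset ι, ∀ v : V,
        (∑ i ∈ S, ((if v = a i then (1 : ZMod 2) else 0) + (if v = b i then 1 else 0)))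
          = (if v ∈ X then 1 else 0) from H _ X rfl hXeven hXT
  intro n
  induction n using Nat.strong_induction_on with
  | _ n ihn =>
    intro X hcard heven hT
    rcases X.eq_empty_or_nonempty with rfl | ⟨x, hx⟩
    · exact ⟨∅, fun v => by simp⟩
    · have hcard2 : 2 ≤ X.card := by
        have h1 : 1 ≤ X.card := Finset.card_pos.mpr ⟨x, hx⟩
        rcases heven with ⟨r, hr⟩
        omega
      have hne : (X.erase x).Nonempty := by
        rw [← Finset.card_pos, Finset.card_erase_of_mem hx]
        omega
      obtain ⟨y, hy⟩ := hne
      have hyx : y ≠ x := Finset.ne_of_mem_erase hy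
      have hyX : y ∈ X := Finset.mem_of_mem_erase hy
      obtain ⟨p⟩ := hconn ⟨x, hT x hx⟩ ⟨y, hT y hyX⟩
      obtain ⟨S₀, hS₀⟩ := walk_tjoin a b p
      set X' : Finset V := (X.erase x).erase y with hX'
      have hX'card : X'.card = n - 2 := by
        rw [hX', Finset.card_erase_of_mem hy, Finset.card_erase_of_mem hx, hcard]
        omega
      have hX'even : Even X'.card := by
        rw [hX'card]
        rcases heven with ⟨r, hr⟩
        rw [hcard] at hr
        exact ⟨r - 1, by omega⟩
      obtain ⟨S', hS'⟩ := ihn (n - 2) (by omega) X' hX'card hX'even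
        (fun v hv => hT v (Finset.mem_of_mem_erase (Finset.mem_of_mem_erase hv)))
      refine ⟨symmDiff S₀ S', fun v => ?_⟩
      rw [sum_symmDiff_zmod, hS₀, hS']
      have hxX' : x ∉ X' := fun h => Finset.notMem_erase x _ (Finset.mem_of_mem_erase h)
      have hyX' : y ∉ X' := fun h => Finset.notMem_erase y _ h
      by_cases h1 : v = x
      · subst h1
        simp [hyx.symm, hxX', hx]
      · by_cases h2 : v = y
        · subst h2
          simp [hyx, hyX', hyX]
        · have : (v ∈ X') ↔ (v ∈ X) := by
            simp [hX', Finset.mem_erase, h1, h2]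
          simp only [if_neg h1, if_neg h2, zero_add, this]

private lemma card_nbr {V : Type} [Fintype V] [DecidableEq V] (Ef : Finset (Sym2 V)) (v : V) :
    (Finset.univ.filter fun w => s(v, w) ∈ Ef).card = (Ef.filter (fun e => v ∈ e)).card := by
  apply Finset.card_bij (fun w _ => s(v, w))
  · intro w hw
    rw [Finset.mem_filter] at hw ⊢
    exact ⟨hw.2, Sym2.mem_mk_left v w⟩
  · intro w1 h1 w2 h2 heq
    exact Sym2.congr_right.mp heq
  · intro e he
    rw [Finset.mem_filter] at he
    obtain ⟨w, rfl⟩ := Sym2.mem_iff_exists.mp he.2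
    exact ⟨w, Finset.mem_filter.mpr ⟨Finset.mem_univ w, he.1⟩, rfl⟩

private lemma even_even (n m : ℕ) (h : ((n : ZMod 2)) = (m : ZMod 2)) (h2 : Even m) :
    Even n := by
  rw [even_iff_zmod2] at h2 ⊢
  rw [h, h2]

private lemma sum_mem_sym2 {V : Type} [Fintype V] [DecidableEq V] (e : Sym2 V)
    (hne : ¬ e.IsDiag) : (∑ v : V, if v ∈ e then 1 else 0) = 2 := by
  revert hne
  induction e using Sym2.ind with
  | _ x y =>
    intro hne
    rw [Sym2.mk_isDiag_iff] at hne
    rw [← Finset.card_filter]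
    have h : Finset.univ.filter (fun v => v ∈ s(x, y)) = {x, y} := by
      ext v
      simp [Sym2.mem_iff]
    rw [h, Finset.card_pair hne]

end Helpers

/-- The union of two edge-disjoint `T`-connectors contains a connected
subgraph with all degrees even containing every vertex of `T`. -/
theorem union_of_two_TConnectors {V : Type} [Fintype V] {G : SimpleGraph V} {T : Set V}
    (A₁ A₂ : TConnector G T) (hdisj : Disjoint A₁.edgeSet A₂.edgeSet) :
    ∃ C : (A₁.graph ⊔ A₂.graph).Subgraph,
      C.Connected ∧ T ⊆ C.verts ∧ ∀ v, Even ((C.neighborSet v).ncard) := by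
  classical
  haveI : Fintype A₁.ι := @Fintype.ofFinite _ A₁.finite
  haveI : Fintype A₂.ι := @Fintype.ofFinite _ A₂.finite
  set H : SimpleGraph V := A₁.graph ⊔ A₂.graph with hH
  obtain ⟨⟨t, ht⟩⟩ : Nonempty ↑T := A₁.shortcut_conn.nonempty
  by_cases hT2 : ∃ t' ∈ T, t' ≠ t
  swap
  · -- degenerate case `T = {t}`
    push_neg at hT2
    refine ⟨H.singletonSubgraph t, SimpleGraph.Subgraph.singletonSubgraph_connected, ?_, ?_⟩
    · intro u hu
      rw [SimpleGraph.singletonSubgraph_verts, Set.mem_singleton_iff]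
      exact hT2 u hu
    · intro v
      rw [SimpleGraph.neighborSet_singletonSubgraph, Set.ncard_empty]
      exact Even.zero
  obtain ⟨t', ht', htt'⟩ := hT2
  -- lifting the paths to walks in `H`
  have hWmem : ∀ (A : TConnector G T), A.graph ≤ H →
      ∀ i, ∀ e ∈ (A.walk i).edges, e ∈ H.edgeSet := by
    intro A hle i e he
    apply SimpleGraph.edgeSet_mono hle
    rw [TConnector.graph, SimpleGraph.edgeSet_fromEdgeSet]
    exact ⟨Set.mem_iUnion.mpr ⟨i, he⟩,
      G.not_isDiag_of_mem_edgeSet (SimpleGraph.Walk.edges_subset_edgeSet (A.walk i) he)⟩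
  set w₁ : (i : A₁.ι) → H.Walk (A₁.a i) (A₁.b i) :=
    fun i => (A₁.walk i).transfer H (hWmem A₁ le_sup_left i) with hw₁def
  set w₂ : (i : A₂.ι) → H.Walk (A₂.a i) (A₂.b i) :=
    fun i => (A₂.walk i).transfer H (hWmem A₂ le_sup_right i) with hw₂def
  set K₁ : A₁.ι → H.Subgraph := fun i => (w₁ i).toSubgraph with hK₁def
  set K₂ : A₂.ι → H.Subgraph := fun i => (w₂ i).toSubgraph with hK₂def
  have hK₁adj : ∀ i u w, (K₁ i).Adj u w ↔ s(u, w) ∈ (A₁.walk i).edges := by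
    intro i u w
    rw [hK₁def, ← SimpleGraph.Subgraph.mem_edgeSet, SimpleGraph.Walk.mem_edges_toSubgraph,
      hw₁def, SimpleGraph.Walk.edges_transfer]
  have hK₂adj : ∀ i u w, (K₂ i).Adj u w ↔ s(u, w) ∈ (A₂.walk i).edges := by
    intro i u w
    rw [hK₂def, ← SimpleGraph.Subgraph.mem_edgeSet, SimpleGraph.Walk.mem_edges_toSubgraph,
      hw₂def, SimpleGraph.Walk.edges_transfer]
  have hK₁verts : ∀ i v, v ∈ (K₁ i).verts ↔ v ∈ (A₁.walk i).support := by
    intro i v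
    rw [hK₁def, SimpleGraph.Walk.mem_verts_toSubgraph, hw₁def, SimpleGraph.Walk.support_transfer]
  have hK₂verts : ∀ i v, v ∈ (K₂ i).verts ↔ v ∈ (A₂.walk i).support := by
    intro i v
    rw [hK₂def, SimpleGraph.Walk.mem_verts_toSubgraph, hw₂def, SimpleGraph.Walk.support_transfer]
  -- edge finsets
  set F₁ : Finset (Sym2 V) := Finset.univ.biUnion (fun i => (A₁.walk i).edges.toFinset)
    with hF₁def
  have hd₁ : ∀ i j, i ≠ j →
      Disjoint ((A₁.walk i).edges.toFinset) ((A₁.walk j).edges.toFinset) := by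
    intro i j hij
    rw [Finset.disjoint_left]
    intro e he1 he2
    exact A₁.edgeDisj i j hij e (List.mem_toFinset.mp he1) (List.mem_toFinset.mp he2)
  have hd₂ : ∀ i j, i ≠ j →
      Disjoint ((A₂.walk i).edges.toFinset) ((A₂.walk j).edges.toFinset) := by
    intro i j hij
    rw [Finset.disjoint_left]
    intro e he1 he2
    exact A₂.edgeDisj i j hij e (List.mem_toFinset.mp he1) (List.mem_toFinset.mp he2)
  have hpar₁ : ∀ v, (((F₁.filter (fun e => v ∈ e)).card : ℕ) : ZMod 2)
      = ∑ i, ((if v = A₁.a i then (1 : ZMod 2) else 0) + (if v = A₁.b i then 1 else 0)) := by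
    intro v
    rw [hF₁def, Finset.filter_biUnion,
      Finset.card_biUnion (fun i _ j _ hij => Finset.disjoint_filter_filter (hd₁ i j hij)),
      Nat.cast_sum]
    exact Finset.sum_congr rfl fun i _ => edge_count_parity (A₁.walk i) (A₁.isPath i) v
  set X : Finset V := Finset.univ.filter (fun v => Odd (F₁.filter (fun e => v ∈ e)).card)
    with hXdef
  have hXmem : ∀ v, v ∈ X ↔ Odd (F₁.filter (fun e => v ∈ e)).card := by
    intro v
    rw [hXdef, Finset.mem_filter]
    simp
  have hcast₁ : ∀ v, (((F₁.filter (fun e => v ∈ e)).card : ℕ) : ZMod 2)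
      = if v ∈ X then 1 else 0 := by
    intro v
    rw [zmod2_cast_eq]
    exact if_congr (hXmem v).symm rfl rfl
  have hXT : ∀ v ∈ X, v ∈ T := by
    intro v hv
    by_contra hvT
    rw [hXmem v] at hv
    have h0 : (((F₁.filter (fun e => v ∈ e)).card : ℕ) : ZMod 2) = 0 := by
      rw [hpar₁]
      apply Finset.sum_eq_zero
      intro i _
      rw [if_neg (fun h => hvT (by rw [h]; exact A₁.a_mem i)),
        if_neg (fun h => hvT (by rw [h]; exact A₁.b_mem i)), add_zero]
    exact (Nat.not_even_iff_odd.mpr hv) ((even_iff_zmod2 _).mpr h0)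
  have hF₁G : ∀ e ∈ F₁, e ∈ G.edgeSet := by
    intro e he
    rw [hF₁def] at he
    obtain ⟨i, -, hei⟩ := Finset.mem_biUnion.mp he
    exact SimpleGraph.Walk.edges_subset_edgeSet (A₁.walk i) (List.mem_toFinset.mp hei)
  have hXeven : Even X.card := by
    have hsum : Even (∑ v : V, (F₁.filter (fun e => v ∈ e)).card) := by
      rw [Finset.sum_congr rfl (fun v _ => Finset.card_filter _ _), Finset.sum_comm]
      apply Finset.even_sum
      intro e he
      rw [sum_mem_sym2 e (G.not_isDiag_of_mem_edgeSet (hF₁G e he))]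
      exact ⟨1, rfl⟩
    exact (Finset.even_sum_iff_even_card_odd
      (fun v => (F₁.filter (fun e => v ∈ e)).card)).mp hsum
  -- the T-join from the second connector
  obtain ⟨S, hS⟩ := exists_tjoin A₂.a A₂.b A₂.shortcut_conn X hXeven hXT
  set F₂ : Finset (Sym2 V) := S.biUnion (fun i => (A₂.walk i).edges.toFinset) with hF₂def
  have hpar₂ : ∀ v, (((F₂.filter (fun e => v ∈ e)).card : ℕ) : ZMod 2)
      = if v ∈ X then 1 else 0 := by
    intro v
    rw [hF₂def, Finset.filter_biUnion,
      Finset.card_biUnion (fun i _ j _ hij => Finset.disjoint_filter_filter (hd₂ i j hij)),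
      Nat.cast_sum,
      Finset.sum_congr rfl (fun i _ => edge_count_parity (A₂.walk i) (A₂.isPath i) v), hS v]
  have hdisjF : Disjoint F₁ F₂ := by
    rw [Finset.disjoint_left]
    intro e he1 he2
    rw [hF₁def] at he1
    rw [hF₂def] at he2
    obtain ⟨i, -, hei⟩ := Finset.mem_biUnion.mp he1
    obtain ⟨j, -, hej⟩ := Finset.mem_biUnion.mp he2
    exact Set.disjoint_left.mp hdisj (Set.mem_iUnion.mpr ⟨i, List.mem_toFinset.mp hei⟩)
      (Set.mem_iUnion.mpr ⟨j, List.mem_toFinset.mp hej⟩)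
  -- the subgraph
  set C : H.Subgraph := (⨆ i, K₁ i) ⊔ (⨆ i ∈ S, K₂ i) with hCdef
  have hCadj : ∀ u w, C.Adj u w ↔ s(u, w) ∈ F₁ ∪ F₂ := by
    intro u w
    rw [hCdef, SimpleGraph.Subgraph.sup_adj, Finset.mem_union]
    constructor
    · rintro (h | h)
      · obtain ⟨i, hi⟩ := SimpleGraph.Subgraph.iSup_adj.mp h
        exact Or.inl (Finset.mem_biUnion.mpr
          ⟨i, Finset.mem_univ i, List.mem_toFinset.mpr ((hK₁adj i u w).mp hi)⟩)
      · obtain ⟨i, hi⟩ := SimpleGraph.Subgraph.iSup_adj.mp h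
        obtain ⟨hiS, hadj⟩ := SimpleGraph.Subgraph.iSup_adj.mp hi
        exact Or.inr (Finset.mem_biUnion.mpr
          ⟨i, hiS, List.mem_toFinset.mpr ((hK₂adj i u w).mp hadj)⟩)
    · rintro (h | h)
      · obtain ⟨i, -, hei⟩ := Finset.mem_biUnion.mp h
        exact Or.inl (SimpleGraph.Subgraph.iSup_adj.mpr
          ⟨i, (hK₁adj i u w).mpr (List.mem_toFinset.mp hei)⟩)
      · obtain ⟨i, hiS, hei⟩ := Finset.mem_biUnion.mp h
        exact Or.inr (SimpleGraph.Subgraph.iSup_adj.mpr ⟨i, SimpleGraph.Subgraph.iSup_adj.mpr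
          ⟨hiS, (hK₂adj i u w).mpr (List.mem_toFinset.mp hei)⟩⟩)
  -- degrees are even
  have hdeg : ∀ v, Even ((C.neighborSet v).ncard) := by
    intro v
    have h1 : C.neighborSet v = ↑(Finset.univ.filter fun w => s(v, w) ∈ F₁ ∪ F₂) := by
      ext w
      rw [SimpleGraph.Subgraph.mem_neighborSet, hCadj, Finset.coe_filter]
      simp
    rw [h1, Set.ncard_coe_finset, card_nbr, Finset.filter_union,
      Finset.card_union_of_disjoint (Finset.disjoint_filter_filter hdisjF),
      even_iff_zmod2, Nat.cast_add, hcast₁ v, hpar₂ v]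
    exact zmod2_add_self _
  -- every vertex of `T` is an endpoint of a path of `A₁`
  have hcov : ∀ u, u ∈ T → ∃ i, u = A₁.a i ∨ u = A₁.b i := by
    intro u hu
    have hex : ∃ w, ∃ hw : w ∈ T, w ≠ u := by
      by_cases h : u = t
      · exact ⟨t', ht', by rw [h]; exact htt'⟩
      · exact ⟨t, ht, fun hh => h hh.symm⟩
    obtain ⟨w, hw, hwu⟩ := hex
    obtain ⟨p⟩ := A₁.shortcut_conn ⟨u, hu⟩ ⟨w, hw⟩
    have hne : (⟨u, hu⟩ : ↑T) ≠ ⟨w, hw⟩ := fun hh => hwu (congrArg Subtype.val hh).symm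
    cases p with
    | nil => exact absurd rfl hne
    | cons hadj q =>
      obtain ⟨i, hi⟩ := adj_shortcut A₁.a A₁.b hadj
      exact ⟨i, hi.imp (fun h => h.1) (fun h => h.1)⟩
  have hleC₁ : ∀ i, K₁ i ≤ C := fun i => le_trans (le_iSup K₁ i) le_sup_left
  have hleC₂ : ∀ i, i ∈ S → K₂ i ≤ C := fun i hi =>
    le_trans (le_trans (le_iSup (fun _ : i ∈ S => K₂ i) hi)
      (le_iSup (fun j => ⨆ _ : j ∈ S, K₂ j) i)) le_sup_right
  have hTsub : T ⊆ C.verts := by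
    intro u hu
    obtain ⟨i, hi⟩ := hcov u hu
    apply SimpleGraph.Subgraph.verts_mono (hleC₁ i)
    apply (hK₁verts i u).mpr
    rcases hi with h | h <;> rw [h]
    exacts [SimpleGraph.Walk.start_mem_support _, SimpleGraph.Walk.end_mem_support _]
  -- reachability helpers
  have hreach : ∀ (K : H.Subgraph), K ≤ C → K.Connected →
      ∀ u v (hu : u ∈ K.verts) (hv : v ∈ K.verts) (hu' : u ∈ C.verts) (hv' : v ∈ C.verts),
      C.coe.Reachable ⟨u, hu'⟩ ⟨v, hv'⟩ := by
    intro K hKC hK u v hu hv hu' hv'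
    exact (hK ⟨u, hu⟩ ⟨v, hv⟩).map (SimpleGraph.Subgraph.inclusion hKC)
  have hK₁conn : ∀ i, (K₁ i).Connected := by
    intro i
    rw [hK₁def]
    exact (w₁ i).toSubgraph_connected
  have hK₂conn : ∀ i, (K₂ i).Connected := by
    intro i
    rw [hK₂def]
    exact (w₂ i).toSubgraph_connected
  have hRT : ∀ (c d : ↑T)
      (_ : ((SimpleGraph.fromEdgeSet (⋃ i, {s(A₁.a i, A₁.b i)})).induce T).Walk c d),
      C.coe.Reachable ⟨c.1, hTsub c.2⟩ ⟨d.1, hTsub d.2⟩ := by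
    intro c d p
    induction p with
    | nil => exact SimpleGraph.Reachable.refl _
    | @cons c m d hadj q ih =>
      refine SimpleGraph.Reachable.trans ?_ ih
      obtain ⟨i, hi⟩ := adj_shortcut A₁.a A₁.b hadj
      have hc : (c : V) ∈ (K₁ i).verts := by
        apply (hK₁verts i _).mpr
        rcases hi with ⟨h1, -⟩ | ⟨h1, -⟩ <;> rw [h1]
        exacts [SimpleGraph.Walk.start_mem_support _, SimpleGraph.Walk.end_mem_support _]
      have hm : (m : V) ∈ (K₁ i).verts := by
        apply (hK₁verts i _).mpr
        rcases hi with ⟨-, h2⟩ | ⟨-, h2⟩ <;> rw [h2]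
        exacts [SimpleGraph.Walk.end_mem_support _, SimpleGraph.Walk.start_mem_support _]
      exact hreach (K₁ i) (hleC₁ i) (hK₁conn i) _ _ hc hm _ _
  have hCverts : C.verts = (⋃ i, (K₁ i).verts) ∪ (⋃ i, ⋃ _ : i ∈ S, (K₂ i).verts) := by
    rw [hCdef]
    simp only [SimpleGraph.Subgraph.verts_sup, SimpleGraph.Subgraph.verts_iSup]
  have hanchor : ∀ x (hx : x ∈ C.verts),
      ∃ tt, ∃ htt : tt ∈ T, C.coe.Reachable ⟨x, hx⟩ ⟨tt, hTsub htt⟩ := by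
    intro x hx
    have hx' := hx
    rw [hCverts] at hx'
    rcases hx' with h | h
    · obtain ⟨i, hi⟩ := Set.mem_iUnion.mp h
      refine ⟨A₁.a i, A₁.a_mem i, ?_⟩
      exact hreach (K₁ i) (hleC₁ i) (hK₁conn i) _ _ hi
        ((hK₁verts i _).mpr (SimpleGraph.Walk.start_mem_support _)) _ _
    · obtain ⟨i, hi⟩ := Set.mem_iUnion.mp h
      obtain ⟨hiS, hvi⟩ := Set.mem_iUnion.mp hi
      refine ⟨A₂.a i, A₂.a_mem i, ?_⟩
      exact hreach (K₂ i) (hleC₂ i hiS) (hK₂conn i) _ _ hvi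
        ((hK₂verts i _).mpr (SimpleGraph.Walk.start_mem_support _)) _ _
  have hconn : C.Connected := by
    rw [SimpleGraph.Subgraph.connected_iff', SimpleGraph.connected_iff]
    constructor
    · rintro ⟨x, hx⟩ ⟨y, hy⟩
      obtain ⟨tx, htx, hrx⟩ := hanchor x hx
      obtain ⟨ty, hty, hry⟩ := hanchor y hy
      obtain ⟨p⟩ := A₁.shortcut_conn ⟨tx, htx⟩ ⟨ty, hty⟩
      exact hrx.trans ((hRT ⟨tx, htx⟩ ⟨ty, hty⟩ p).trans hry.symm)
    · exact ⟨⟨t, hTsub ht⟩⟩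
  exact ⟨C, hconn, hTsub, hdeg⟩
end

section
/- Let G be a graph, W a set of vertices of G of degree 2 or 3, and R a closed trail in G. Suppose every vertex of W not visited by R has a neighbor visited by R. Then G contains a closed W-quasitrail that visits every vertex visited by R and every vertex of W. -/
open SimpleGraph

private lemma infix_pair_split {α : Type*} {a b : α} :
    ∀ (l₁ l₂ : List α), [a, b] <:+: l₁ ++ l₂ →
      [a, b] <:+: l₁ ∨ [a, b] <:+: l₂ ∨ l₁.getLast? = some a
  | [], l₂, h => Or.inr (Or.inl (by simpa using h))
  | c :: l₁, l₂, h => by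
    rw [List.cons_append, List.infix_cons_iff] at h
    rcases h with h | h
    · rw [List.cons_prefix_cons] at h
      obtain ⟨rfl, h⟩ := h
      cases l₁ with
      | nil => exact Or.inr (Or.inr (by simp))
      | cons d l₁ =>
        rw [List.cons_append, List.cons_prefix_cons] at h
        obtain ⟨rfl, -⟩ := h
        exact Or.inl (List.IsPrefix.isInfix ⟨l₁, rfl⟩)
    · rcases infix_pair_split l₁ l₂ h with h' | h' | h'
      · exact Or.inl (h'.trans (List.suffix_cons c l₁).isInfix)
      · exact Or.inr (Or.inl h')
      · refine Or.inr (Or.inr ?_)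
        cases l₁ with
        | nil => simp at h'
        | cons d l₁ => rw [List.getLast?_cons_cons]; exact h'

private lemma walk_getLast?_snd {V : Type} {G : SimpleGraph V} {c b : V} (p : G.Walk c b)
    {d : G.Dart} (h : p.darts.getLast? = some d) : d.snd = b := by
  have hne : p.darts ≠ [] := by
    intro hnil; rw [hnil] at h; simp at h
  have h2 := List.getLast?_eq_getLast hne
  rw [h2] at h
  obtain rfl : p.darts.getLast hne = d := Option.some.inj h
  rw [SimpleGraph.Walk.getLast_darts_eq_lastDart]; rfl

private lemma aux_quasi {V : Type} [Fintype V] [DecidableEq V]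
    (G : SimpleGraph V) (W : Set V) {x : V} (Rsup : List V)
    (hx : x ∈ Rsup)
    (hnbr : ∀ w ∈ W, w ∉ Rsup → ∃ v, G.Adj v w ∧ v ∈ Rsup) :
    ∀ n : ℕ, ∀ p : G.Walk x x,
      {w | w ∈ W ∧ w ∉ p.support}.ncard ≤ n →
      (∀ u ∈ Rsup, u ∈ p.support) →
      (∀ e, p.edges.count e ≤ 2) →
      (∀ e, p.edges.count e = 2 →
        ∃ w u, w ∈ W ∧ w ∉ Rsup ∧ e = s(u, w) ∧ p.support.tail.count w = 1 ∧
          ∃ d₁ d₂ : G.Dart, d₁.toProd = (u, w) ∧ d₂.toProd = (w, u) ∧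
            [d₁, d₂] <:+: (p.darts ++ p.darts)) →
      ∃ q : G.Walk x x,
        ((∀ e, q.edges.count e ≤ 2) ∧
          ∀ e, q.edges.count e = 2 →
            ∃ w u, w ∈ W ∧ e = s(u, w) ∧ q.support.tail.count w = 1 ∧
              ∃ d₁ d₂ : G.Dart, d₁.toProd = (u, w) ∧ d₂.toProd = (w, u) ∧
                [d₁, d₂] <:+: (q.darts ++ q.darts)) ∧
        (∀ u ∈ p.support, u ∈ q.support) ∧ ∀ w ∈ W, w ∈ q.support := by
  intro n
  induction n with
  | zero =>
    intro p hcard hRs hc2 hdb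
    have h0 : {w | w ∈ W ∧ w ∉ p.support} = ∅ :=
      (Set.ncard_eq_zero (Set.toFinite _)).mp (Nat.le_zero.mp hcard)
    refine ⟨p, ⟨hc2, fun e he => ?_⟩, fun u hu => hu, fun w hw => ?_⟩
    · obtain ⟨w, u, hwW, _, rest⟩ := hdb e he
      exact ⟨w, u, hwW, rest⟩
    · by_contra hns
      have hmem : w ∈ {w | w ∈ W ∧ w ∉ p.support} := ⟨hw, hns⟩
      rw [h0] at hmem
      exact hmem
  | succ n ih =>
    intro p hcard hRs hc2 hdb
    by_cases hS : {w | w ∈ W ∧ w ∉ p.support} = ∅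
    · exact ih p (by rw [hS]; simp) hRs hc2 hdb
    · obtain ⟨w, hw⟩ := Set.nonempty_iff_ne_empty.mpr hS
      have hwR : w ∉ Rsup := fun h => hw.2 (hRs w h)
      obtain ⟨v, hvw, hvR⟩ := hnbr w hw.1 hwR
      have hvp : v ∈ p.support := hRs v hvR
      have hwv : w ≠ v := fun h => hw.2 (h ▸ hvp)
      let t : G.Walk x v := p.takeUntil v hvp
      let dr : G.Walk v x := p.dropUntil v hvp
      have hspec : t.append dr = p := p.take_spec hvp
      let D1 : G.Dart := ⟨(v, w), hvw⟩
      let D2 : G.Dart := ⟨(w, v), hvw.symm⟩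
      let det : G.Walk v v := Walk.cons hvw (Walk.cons hvw.symm Walk.nil)
      let p' : G.Walk x x := t.append (det.append dr)
      -- structural facts
      have hdartsP : p.darts = t.darts ++ dr.darts := by
        have := SimpleGraph.Walk.darts_append t dr
        rw [hspec] at this; exact this
      have hedgesP : p.edges = t.edges ++ dr.edges := by
        have := SimpleGraph.Walk.edges_append t dr
        rw [hspec] at this; exact this
      have hsupP : p.support = t.support ++ dr.support.tail := by
        have := SimpleGraph.Walk.support_append t dr
        rw [hspec] at this; exact this
      have htailP : p.support.tail = t.support.tail ++ dr.support.tail := by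
        have := SimpleGraph.Walk.tail_support_append t dr
        rw [hspec] at this; exact this
      have hdarts' : p'.darts = t.darts ++ (D1 :: D2 :: dr.darts) := by
        show (t.append (det.append dr)).darts = _
        rw [SimpleGraph.Walk.darts_append, SimpleGraph.Walk.darts_append]
        rfl
      have hedges' : p'.edges = t.edges ++ (s(v, w) :: s(w, v) :: dr.edges) := by
        show (t.append (det.append dr)).edges = _
        rw [SimpleGraph.Walk.edges_append, SimpleGraph.Walk.edges_append]
        rfl
      have hsup' : p'.support = t.support ++ ([w, v] ++ dr.support.tail) := by
        show (t.append (det.append dr)).support = _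
        rw [SimpleGraph.Walk.support_append, SimpleGraph.Walk.support_append]
        rfl
      have htail' : p'.support.tail = t.support.tail ++ ([w, v] ++ dr.support.tail) := by
        show (t.append (det.append dr)).support.tail = _
        rw [SimpleGraph.Walk.tail_support_append, SimpleGraph.Walk.tail_support_append]
        rfl
      -- membership facts
      have hsub : ∀ u ∈ p.support, u ∈ p'.support := by
        intro u hu
        rw [hsupP] at hu; rw [hsup']
        simp only [List.mem_append] at hu ⊢
        tauto
      have hwp' : w ∈ p'.support := by rw [hsup']; simp
      have hnt : w ∉ t.support := fun h => hw.2 (by rw [hsupP]; exact List.mem_append_left _ h)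
      have hnd : w ∉ dr.support.tail := fun h => hw.2 (by rw [hsupP]; exact List.mem_append_right _ h)
      have hevw : s(v, w) ∉ p.edges := fun h =>
        hw.2 (SimpleGraph.Walk.snd_mem_support_of_mem_edges p h)
      have hcount0 : p.edges.count s(v, w) = 0 := List.count_eq_zero_of_not_mem hevw
      have hswap : s(w, v) = s(v, w) := Sym2.eq_swap
      have hcnt : ∀ e : Sym2 V,
          p'.edges.count e = p.edges.count e + if e = s(v, w) then 2 else 0 := by
        intro e
        rw [hedges', hedgesP, List.count_append, List.count_append,
          List.count_cons, List.count_cons, hswap]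
        rcases eq_or_ne e s(v, w) with rfl | he
        · simp; omega
        · simp [he, Ne.symm he]
      -- invariants for p'
      have hcard' : {w' | w' ∈ W ∧ w' ∉ p'.support}.ncard ≤ n := by
        have hSsub : {w' | w' ∈ W ∧ w' ∉ p'.support}
            ⊆ {w' | w' ∈ W ∧ w' ∉ p.support} \ {w} := by
          rintro a ⟨haW, hap⟩
          refine ⟨⟨haW, fun h => hap (hsub a h)⟩, ?_⟩
          rintro rfl; exact hap hwp'
        have h1 := Set.ncard_le_ncard hSsub (Set.toFinite _)
        have h2 := Set.ncard_diff_singleton_lt_of_mem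
          (show w ∈ {w' | w' ∈ W ∧ w' ∉ p.support} from hw) (Set.toFinite _)
        omega
      have hRs' : ∀ u ∈ Rsup, u ∈ p'.support := fun u hu => hsub u (hRs u hu)
      have hc2' : ∀ e, p'.edges.count e ≤ 2 := by
        intro e
        rw [hcnt e]
        by_cases he : e = s(v, w)
        · rw [he, hcount0]; simp
        · simp only [he, if_false, Nat.add_zero]; exact hc2 e
      have hdb' : ∀ e, p'.edges.count e = 2 →
          ∃ w' u', w' ∈ W ∧ w' ∉ Rsup ∧ e = s(u', w') ∧ p'.support.tail.count w' = 1 ∧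
            ∃ d₁ d₂ : G.Dart, d₁.toProd = (u', w') ∧ d₂.toProd = (w', u') ∧
              [d₁, d₂] <:+: (p'.darts ++ p'.darts) := by
        intro e he2
        rw [hcnt e] at he2
        by_cases he : e = s(v, w)
        · subst he
          refine ⟨w, v, hw.1, hwR, rfl, ?_, D1, D2, rfl, rfl, ?_⟩
          · rw [htail', List.count_append, List.count_append,
              List.count_eq_zero_of_not_mem (fun h => hnt (List.mem_of_mem_tail h)),
              List.count_eq_zero_of_not_mem hnd]
            simp [List.count_cons, hwv]
          · refine List.IsInfix.trans ?_ (List.prefix_append p'.darts p'.darts).isInfix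
            exact ⟨t.darts, dr.darts, by rw [hdarts']; simp⟩
        · rw [if_neg he, Nat.add_zero] at he2
          obtain ⟨w', u', hw'W, hw'R, rfl, hcw', d₁, d₂, hd₁, hd₂, hinf⟩ := hdb _ he2
          have hw'p : w' ∈ p.support := by
            have : 0 < p.support.tail.count w' := by omega
            exact List.mem_of_mem_tail (List.count_pos_iff.mp this)
          have hw'w : w' ≠ w := fun h => hw.2 (h ▸ hw'p)
          have hw'v : w' ≠ v := fun h => hw'R (h ▸ hvR)
          have hw'x : w' ≠ x := fun h => hw'R (h ▸ hx)
          refine ⟨w', u', hw'W, hw'R, rfl, ?_, d₁, d₂, hd₁, hd₂, ?_⟩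
          · rw [htailP, List.count_append] at hcw'
            rw [htail', List.count_append, List.count_append]
            simpa [List.count_cons, hw'w, hw'v, hw'w.symm, hw'v.symm] using hcw'
          · have hsndw' : d₁.snd = w' := congrArg Prod.snd hd₁
            have hpre : t.darts <+: p'.darts := ⟨D1 :: D2 :: dr.darts, hdarts'.symm⟩
            have hsuf : dr.darts <:+ p'.darts := ⟨t.darts ++ [D1, D2], by rw [hdarts']; simp⟩
            have hts : t.darts <:+: p'.darts ++ p'.darts :=
              hpre.isInfix.trans (List.prefix_append p'.darts p'.darts).isInfix
            have hds : dr.darts <:+: p'.darts ++ p'.darts :=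
              hsuf.isInfix.trans (List.prefix_append p'.darts p'.darts).isInfix
            have hinner : [d₁, d₂] <:+: p.darts →
                [d₁, d₂] <:+: p'.darts ++ p'.darts := by
              intro h
              rw [hdartsP] at h
              rcases infix_pair_split _ _ h with h' | h' | h'
              · exact h'.trans hts
              · exact h'.trans hds
              · exact absurd (hsndw'.symm.trans (walk_getLast?_snd t h')) hw'v
            rcases infix_pair_split _ _ hinf with h' | h' | h'
            · exact hinner h'
            · exact hinner h'
            · exact absurd (hsndw'.symm.trans (walk_getLast?_snd p h')) hw'x
      obtain ⟨q, hq1, hq2, hq3⟩ := ih p' hcard' hRs' hc2' hdb'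
      exact ⟨q, hq1, fun u hu => hq2 u (hsub u hu), hq3⟩

/-- Given a closed trail `R` and a set `W` of vertices of degree 2
or 3 such that every vertex of `W` not visited by `R` has a neighbor visited by
`R`, the graph contains a closed `W`-quasitrail visiting every vertex visited by
`R` and every vertex of `W`. -/
theorem quasitrail_from_trail {V : Type} [Fintype V] [DecidableEq V]
    (G : SimpleGraph V) (W : Set V)
    (hW : ∀ w ∈ W, (G.neighborSet w).ncard = 2 ∨ (G.neighborSet w).ncard = 3)
    {x : V} (R : G.Walk x x) (hR : R.IsTrail)
    (hnbr : ∀ w ∈ W, w ∉ R.support → ∃ v, G.Adj v w ∧ v ∈ R.support) :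
    ∃ p : G.Walk x x, IsClosedQuasitrail G W p ∧
      (∀ u ∈ R.support, u ∈ p.support) ∧ ∀ w ∈ W, w ∈ p.support := by
  obtain ⟨q, hq1, hq2, hq3⟩ := aux_quasi G W R.support R.start_mem_support hnbr
    {w | w ∈ W ∧ w ∉ R.support}.ncard R le_rfl (fun u hu => hu)
    (fun e => le_trans (List.nodup_iff_count_le_one.mp hR.edges_nodup e) one_le_two)
    (fun e he => by
      have := List.nodup_iff_count_le_one.mp hR.edges_nodup e
      omega)
  exact ⟨q, hq1, hq2, hq3⟩
end

section
/- Let H be a hypergraph and X' a set of hyperedges of H. If X' is not a vertex cut of the line graph L(H) separating two hyperedges, i.e., if all hyperedges of H outside X' lie in a single connected component of L(H) − X', then for any two vertices s₁, s₂ of H each incident with some hyperedge outside X', the edges of the incidence graph IG(H) corresponding to incidences with hyperedges in X' do not separate s₁ from s₂ in IG(H). -/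
open SimpleGraph

/-- If all hyperedges outside `X'` lie in one component of
`L(H) − X'`, then the incidence edges corresponding to `X'` do not separate in
`IG(H)` any two vertices each lying in a hyperedge outside `X'`. -/
theorem incidence_edges_do_not_separate {V E : Type} (He : E → Finset V) (X' : Set E)
    (hcomp : ∀ f g : ↥(X'ᶜ), ((hLineGraph He).induce (X'ᶜ : Set E)).Reachable f g)
    (s₁ s₂ : V) (h₁ : ∃ f, f ∉ X' ∧ s₁ ∈ He f) (h₂ : ∃ g, g ∉ X' ∧ s₂ ∈ He g) :
    ((incGraph He).deleteEdges
        {ed | ∃ (f : E) (v : V), f ∈ X' ∧ v ∈ He f ∧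
          ed = s(Sum.inl v, Sum.inr f)}).Reachable (Sum.inl s₁) (Sum.inl s₂) := by
  classical
  obtain ⟨f, hf, hs1⟩ := h₁
  obtain ⟨g, hg, hs2⟩ := h₂
  set G' := (incGraph He).deleteEdges
      {ed | ∃ (f : E) (v : V), f ∈ X' ∧ v ∈ He f ∧
        ed = s(Sum.inl v, Sum.inr f)} with hG'
  have key : ∀ (e : E), e ∉ X' → ∀ v ∈ He e,
      G'.Reachable (Sum.inl v) (Sum.inr e) := by
    intro e he v hv
    apply SimpleGraph.Adj.reachable
    rw [hG', SimpleGraph.deleteEdges_adj]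
    constructor
    · exact Or.inl ⟨v, e, rfl, rfl, hv⟩
    · rintro ⟨f', v', hf', hv', heq⟩
      rw [Sym2.eq_iff] at heq
      rcases heq with ⟨h1, h2⟩ | ⟨h1, h2⟩
      · exact he (Sum.inr.inj h2 ▸ hf')
      · exact absurd h1 (by simp)
  have main : ∀ a b : ↥(X'ᶜ), G'.Reachable (Sum.inr a.1) (Sum.inr b.1) := by
    intro a b
    obtain ⟨p⟩ := hcomp a b
    induction p with
    | nil => exact SimpleGraph.Reachable.refl _
    | @cons a c b h p ih =>
      obtain ⟨hne, v, hv1, hv2⟩ := h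
      exact ((key a.1 a.2 v hv1).symm.trans (key c.1 c.2 v hv2)).trans ih
  exact ((key f hf s₁ hs1).trans (main ⟨f, hf⟩ ⟨g, hg⟩)).trans (key g hg s₂ hs2).symm
end

section
/- A closed walk obtained from a closed trail R by, for each vertex w in a set W not visited by R (with W consisting of vertices of degree 2 or 3), inserting a detour v, vw, w, wv, v at one occurrence of a chosen neighbor v of w that is visited by R (distinct vertices w using distinct insertions), is a closed W-quasitrail. -/
open SimpleGraph

/-- Walks obtained from `R` by repeatedly inserting a detour `v, vw, w, wv, v` at an
occurrence of a vertex `v` of `R`, where `w ∈ W` is not on the current walk. -/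
inductive InsertDetours {V : Type} (G : SimpleGraph V) (W : Set V) {x : V}
    (R : G.Walk x x) : G.Walk x x → Prop
  | base : InsertDetours G W R R
  | step {p : G.Walk x x} {v w : V} (q₁ : G.Walk x v) (q₂ : G.Walk v x)
      (hp : InsertDetours G W R p) (hdec : p = q₁.append q₂)
      (hw : w ∈ W) (hwp : w ∉ p.support) (hvR : v ∈ R.support) (hadj : G.Adj v w) :
      InsertDetours G W R
        (q₁.append ((SimpleGraph.Walk.cons hadj
          (SimpleGraph.Walk.cons hadj.symm SimpleGraph.Walk.nil)).append q₂))


lemma pair_infix_append {α : Type*} {a b : α} {U V : List α}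
    (h : [a, b] <:+: U ++ V) :
    [a, b] <:+: U ∨ [a, b] <:+: V ∨ (U.getLast? = some a ∧ V.head? = some b) := by
  induction U with
  | nil => exact Or.inr (Or.inl (by simpa using h))
  | cons u U' ih =>
    rw [List.cons_append, List.infix_cons_iff] at h
    rcases h with h | h
    · obtain ⟨rfl, h2⟩ := List.cons_prefix_cons.mp h
      obtain ⟨t, ht⟩ := h2
      cases U' with
      | nil =>
        refine Or.inr (Or.inr ⟨by simp, ?_⟩)
        rw [List.nil_append] at ht
        rw [← ht]; rfl
      | cons u' U'' =>
        left
        have hb : b :: t = u' :: (U'' ++ V) := ht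
        obtain ⟨rfl, -⟩ : b = u' ∧ t = U'' ++ V := by
          injection hb with h1 h2; exact ⟨h1, h2⟩
        exact ⟨[], U'', by simp⟩
    · rcases ih h with h | h | ⟨h1, h2⟩
      · exact Or.inl (h.trans ⟨[u], [], by simp⟩)
      · exact Or.inr (Or.inl h)
      · refine Or.inr (Or.inr ⟨?_, h2⟩)
        cases U' with
        | nil => simp at h1
        | cons a' U'' => rw [List.getLast?_cons_cons]; exact h1

lemma darts_getLast_snd {V : Type*} {G : SimpleGraph V} {x v : V}
    (q : G.Walk x v) {d : G.Dart} (h : q.darts.getLast? = some d) : d.snd = v := by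
  induction q with
  | nil => simp at h
  | cons ha q ih =>
    rw [SimpleGraph.Walk.darts_cons] at h
    cases hq : q.darts with
    | nil =>
      rw [hq, List.getLast?_singleton] at h
      have h0 : q.length = 0 := by rw [← SimpleGraph.Walk.length_darts, hq]; rfl
      cases SimpleGraph.Walk.eq_of_length_eq_zero h0
      injection h with h; subst h; rfl
    | cons d' l =>
      rw [hq, List.getLast?_cons_cons, ← hq] at h
      exact ih h

theorem strongQT {V : Type} [DecidableEq V] (G : SimpleGraph V) (W : Set V)
    {x : V} (R : G.Walk x x) (hR : R.IsTrail)
    (p : G.Walk x x) (h : InsertDetours G W R p) :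
    (∀ y ∈ R.support, y ∈ p.support) ∧
    (∀ e, p.edges.count e ≤ 2) ∧
    ∀ e, p.edges.count e = 2 →
      ∃ w u, w ∈ W ∧ w ∉ R.support ∧ e = s(u, w) ∧ p.support.tail.count w = 1 ∧
        ∃ d₁ d₂ : G.Dart, d₁.toProd = (u, w) ∧ d₂.toProd = (w, u) ∧
          [d₁, d₂] <:+: (p.darts ++ p.darts) := by
  induction h with
  | base =>
    refine ⟨fun y hy => hy, fun e => ?_, fun e he => ?_⟩
    · exact le_trans (List.nodup_iff_count_le_one.mp hR.edges_nodup e) one_le_two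
    · exact absurd he (by have := List.nodup_iff_count_le_one.mp hR.edges_nodup e; omega)
  | @step p v w q₁ q₂ hp hdec hw hwp hvR hadj ih =>
    subst hdec
    obtain ⟨ihs, ihc, ihd⟩ := ih
    set D1 : G.Dart := ⟨(v, w), hadj⟩ with hD1
    set D2 : G.Dart := ⟨(w, v), hadj.symm⟩ with hD2
    set p' := q₁.append ((SimpleGraph.Walk.cons hadj
      (SimpleGraph.Walk.cons hadj.symm SimpleGraph.Walk.nil)).append q₂) with hp'
    have hdarts : p'.darts = q₁.darts ++ D1 :: D2 :: q₂.darts := by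
      simp [hp', SimpleGraph.Walk.darts_append, SimpleGraph.Walk.darts_cons, hD1, hD2]
    have hedges : p'.edges = q₁.edges ++ s(v, w) :: s(w, v) :: q₂.edges := by
      simp [hp', SimpleGraph.Walk.edges_append, SimpleGraph.Walk.edges_cons]
    have hsupp : p'.support = q₁.support ++ w :: v :: q₂.support.tail := by
      simp [hp', SimpleGraph.Walk.support_append, SimpleGraph.Walk.support_cons]
    have hpsupp : (q₁.append q₂).support = q₁.support ++ q₂.support.tail :=
      SimpleGraph.Walk.support_append q₁ q₂
    have hptail : (q₁.append q₂).support.tail = q₁.support.tail ++ q₂.support.tail := by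
      rw [hpsupp, List.tail_append_of_ne_nil q₁.support_ne_nil]
    have hp'tail : p'.support.tail = q₁.support.tail ++ w :: v :: q₂.support.tail := by
      rw [hsupp, List.tail_append_of_ne_nil q₁.support_ne_nil]
    have hpedges : (q₁.append q₂).edges = q₁.edges ++ q₂.edges :=
      SimpleGraph.Walk.edges_append q₁ q₂
    have hnew : s(v, w) ∉ (q₁.append q₂).edges := fun he =>
      hwp (SimpleGraph.Walk.snd_mem_support_of_mem_edges _ he)
    have hwv : s(w, v) = s(v, w) := Sym2.eq_swap
    have hcnt : ∀ e, p'.edges.count e =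
        (q₁.append q₂).edges.count e + if e = s(v, w) then 2 else 0 := by
      intro e
      rw [hedges, hpedges, hwv]
      by_cases hh : e = s(v, w)
      · subst hh
        simp only [List.count_append, List.count_cons, beq_self_eq_true, if_true]
        omega
      · simp only [List.count_append, List.count_cons,
          beq_iff_eq, if_neg (Ne.symm hh), if_neg hh]
        omega
    have hnewcnt : (q₁.append q₂).edges.count s(v, w) = 0 :=
      List.count_eq_zero_of_not_mem hnew
    -- the dart-infix lifting lemma
    have hlift : ∀ d₁ d₂ : G.Dart, d₁.snd ≠ v →
        [d₁, d₂] <:+: ((q₁.append q₂).darts ++ (q₁.append q₂).darts) →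
        [d₁, d₂] <:+: (p'.darts ++ p'.darts) := by
      intro d₁ d₂ hne hinf
      rw [SimpleGraph.Walk.darts_append] at hinf
      have hinf' : [d₁, d₂] <:+: q₁.darts ++ ((q₂.darts ++ q₁.darts) ++ q₂.darts) := by
        simpa [List.append_assoc] using hinf
      have hT : p'.darts ++ p'.darts =
          (q₁.darts ++ [D1, D2]) ++ (q₂.darts ++ q₁.darts) ++ ([D1, D2] ++ q₂.darts) := by
        rw [hdarts]; simp [List.append_assoc]
      rcases pair_infix_append hinf' with h1 | h1 | ⟨h1, -⟩
      · refine h1.trans ?_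
        rw [hT]
        exact ⟨[], [D1, D2] ++ (q₂.darts ++ q₁.darts) ++ ([D1, D2] ++ q₂.darts), by simp⟩
      · rcases pair_infix_append h1 with h2 | h2 | ⟨h2, -⟩
        · refine h2.trans ?_
          rw [hT]
          exact ⟨q₁.darts ++ [D1, D2], [D1, D2] ++ q₂.darts, by simp⟩
        · refine h2.trans ?_
          rw [hT]
          exact ⟨(q₁.darts ++ [D1, D2]) ++ (q₂.darts ++ q₁.darts) ++ [D1, D2], [], by simp⟩
        · exfalso
          rw [← SimpleGraph.Walk.darts_append q₂ q₁] at h2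
          exact hne (darts_getLast_snd (q₂.append q₁) h2)
      · exact absurd (darts_getLast_snd q₁ h1) hne
    refine ⟨fun y hy => ?_, fun e => ?_, fun e he => ?_⟩
    · have := ihs y hy
      rw [hpsupp] at this
      rw [hsupp]
      simp only [List.mem_append, List.mem_cons] at this ⊢
      tauto
    · rw [hcnt e]
      by_cases hh : e = s(v, w)
      · rw [hh, hnewcnt]; simp
      · rw [if_neg hh, Nat.add_zero]; exact ihc e
    · rw [hcnt e] at he
      by_cases hh : e = s(v, w)
      · -- the new doubled edge
        subst hh
        refine ⟨w, v, hw, fun hc => hwp (ihs w hc), rfl, ?_, D1, D2, rfl, rfl, ?_⟩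
        · rw [hp'tail]
          have hw1 : w ∉ q₁.support.tail := fun hc =>
            hwp (by rw [hpsupp]; exact List.mem_append_left _ (List.mem_of_mem_tail hc))
          have hw2 : w ∉ q₂.support.tail := fun hc =>
            hwp (by rw [hpsupp]; exact List.mem_append_right _ hc)
          have hvw : v ≠ w := hadj.ne
          rw [List.count_append, List.count_cons, List.count_cons,
            List.count_eq_zero_of_not_mem hw1, List.count_eq_zero_of_not_mem hw2]
          simp [hvw]
        · refine List.IsInfix.trans ?_ (List.prefix_append p'.darts p'.darts).isInfix
          rw [hdarts]
          exact ⟨q₁.darts, q₂.darts, by simp⟩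
      · -- an old doubled edge
        have he2 : (q₁.append q₂).edges.count e = 2 := by simpa [hh] using he
        obtain ⟨w', u, hw'W, hw'R, rfl, hw'cnt, d₁, d₂, hd₁, hd₂, hinf⟩ := ihd e he2
        have hw'v : w' ≠ v := fun hc => hw'R (hc ▸ hvR)
        have hw'mem : w' ∈ (q₁.append q₂).support := by
          apply List.mem_of_mem_tail
          rw [← List.count_pos_iff]
          omega
        have hw'w : w' ≠ w := fun hc => hwp (hc ▸ hw'mem)
        refine ⟨w', u, hw'W, hw'R, rfl, ?_, d₁, d₂, hd₁, hd₂, ?_⟩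
        · rw [hp'tail]
          rw [hptail, List.count_append] at hw'cnt
          rw [List.count_append, List.count_cons, List.count_cons]
          simp [hw'w.symm, hw'v.symm]
          omega
        · refine hlift d₁ d₂ ?_ hinf
          rw [show d₁.snd = w' from congrArg Prod.snd hd₁]
          exact hw'v

/-- A closed walk obtained from a closed trail `R` by inserting, for
vertices `w ∈ W` (of degree 2 or 3) not visited so far, detours `v, vw, w, wv, v`
at occurrences of neighbors `v` visited by `R`, is a closed `W`-quasitrail. -/
theorem insertDetours_isClosedQuasitrail {V : Type} [DecidableEq V]
    (G : SimpleGraph V) (W : Set V)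
    (hW : ∀ w ∈ W, (G.neighborSet w).ncard = 2 ∨ (G.neighborSet w).ncard = 3)
    {x : V} (R : G.Walk x x) (hR : R.IsTrail)
    (p : G.Walk x x) (h : InsertDetours G W R p) :
    IsClosedQuasitrail G W p := by
  obtain ⟨-, hc, hd⟩ := strongQT G W R hR p h
  refine ⟨hc, fun e he => ?_⟩
  obtain ⟨w, u, hwW, -, h1, h2, h3⟩ := hd e he
  exact ⟨w, u, hwW, h1, h2, h3⟩
end
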